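/- Let G be a finite connected simple undirected graph that is not complete, let k ≥ 1 be an integer with κ(G) ≤ k − 1, let S be a minimum vertex cut of G, and let u ∈ S. Then there exist two distinct vertices v, v' ∈ N(u) such that v ≢^k v'. -/

import Mathlib

open SimpleGraph

/-- `u ≡^k v` in `G`: there is no set `S ⊆ V ∖ {u, v}` with `|S| ≤ k − 1` such that
`u` and `v` lie in different connected components of `G − S`. -/
def kLocConn {V : Type*} (G : SimpleGraph V) (k : ℕ) (u v : V) : Prop :=
  ∀ (S : Finset V) (hu : u ∉ S) (hv : v ∉ S), S.card ≤ k - 1 →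
    (G.induce ((S : Set V))ᶜ).Reachable ⟨u, hu⟩ ⟨v, hv⟩

/-- `S` is a vertex cut of `G`: a proper subset of the vertices whose removal
disconnects the graph. -/
def IsVertexCut {V : Type*} [Fintype V] (G : SimpleGraph V) (S : Finset V) : Prop :=
  S ≠ Finset.univ ∧ ¬ (G.induce ((S : Set V))ᶜ).Connected

/-- Walk in `G` with support inside `s` gives reachability in the induced graph. -/
lemma lemA {V : Type*} {G : SimpleGraph V} {s : Set V} {a b : V} (p : G.Walk a b)
    (hp : ∀ x ∈ p.support, x ∈ s) (ha : a ∈ s) (hb : b ∈ s) :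
    (G.induce s).Reachable ⟨a, ha⟩ ⟨b, hb⟩ := by
  induction p with
  | nil => rfl
  | @cons a c b h q ih =>
    have hc : c ∈ s := hp c (by simp)
    have h1 : (G.induce s).Adj ⟨a, ha⟩ ⟨c, hc⟩ := h
    exact h1.reachable.trans (ih (fun x hx => hp x (by simp [hx])) hc hb)

/-- Reachability in the induced graph gives a walk in `G` with support inside `s`. -/
lemma lemB {V : Type*} {G : SimpleGraph V} {s : Set V} {a b : s}
    (h : (G.induce s).Reachable a b) :
    ∃ p : G.Walk a.1 b.1, ∀ x ∈ p.support, x ∈ s := by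
  obtain ⟨w⟩ := h
  induction w with
  | nil => exact ⟨.nil, by simpa using a.2⟩
  | @cons a c b h q ih =>
    obtain ⟨p, hp⟩ := ih
    refine ⟨.cons h p, ?_⟩
    intro x hx
    rcases List.mem_cons.mp (hx : x ∈ a.1 :: p.support) with h1 | h1
    · exact h1 ▸ a.2
    · exact hp x h1

lemma lemC {V : Type*} [DecidableEq V] {G : SimpleGraph V} {S : Finset V} {u a : V}
    (hu : u ∈ S) (ha : a ∉ S) (p : G.Walk u a)
    (hT : ∀ x ∈ p.support, x ∉ S.erase u) (hone : u ∉ p.support.tail) :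
    ∃ v, G.Adj u v ∧ v ∉ S ∧ ∃ q : G.Walk v a, ∀ x ∈ q.support, x ∉ S := by
  cases p with
  | nil => exact absurd hu ha
  | @cons _ v _ h q =>
    have hone' : u ∉ q.support := by simpa using hone
    have key : ∀ x ∈ q.support, x ∉ S := by
      intro x hx hxS
      have hx1 : x ∉ S.erase u := hT x (by simp [hx])
      have hx2 : x ≠ u := fun he => hone' (he ▸ hx)
      exact hx1 (Finset.mem_erase.mpr ⟨hx2, hxS⟩)
    exact ⟨v, h, key v q.start_mem_support, q, key⟩

theorem stmt4 {V : Type*} [Fintype V] (G : SimpleGraph V)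
    (hconn : G.Connected) (hnc : ∃ a b : V, a ≠ b ∧ ¬ G.Adj a b)
    (k : ℕ) (hk : 1 ≤ k)
    (S : Finset V) (hcut : IsVertexCut G S)
    (hmin : ∀ T : Finset V, IsVertexCut G T → S.card ≤ T.card)
    (hκ : S.card ≤ k - 1) (u : V) (hu : u ∈ S) :
    ∃ v v' : V, G.Adj u v ∧ G.Adj u v' ∧ v ≠ v' ∧ ¬ kLocConn G k v v' := by
  classical
  obtain ⟨hSne, hSdisc⟩ := hcut
  -- nonempty complement
  obtain ⟨z, hz⟩ : ∃ z, z ∉ S := by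
    by_contra h
    push_neg at h
    exact hSne (Finset.eq_univ_iff_forall.mpr h)
  have hne : Nonempty (((S : Set V))ᶜ : Set V) := ⟨⟨z, hz⟩⟩
  -- get two non-reachable vertices in G - S
  have hnp : ¬ (G.induce ((S : Set V))ᶜ).Preconnected := fun h => hSdisc ⟨h⟩
  rw [SimpleGraph.Preconnected] at hnp
  push_neg at hnp
  obtain ⟨⟨a, haS⟩, ⟨b, hbS⟩, hab⟩ := hnp
  have haS' : a ∉ S := haS
  have hbS' : b ∉ S := hbS
  -- erase u gives a connected graph
  set T := S.erase u with hT
  have huT : u ∉ T := Finset.notMem_erase u S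
  have hTconn : (G.induce ((T : Set V))ᶜ).Connected := by
    by_contra h
    have : IsVertexCut G T := ⟨fun he => huT (he ▸ Finset.mem_univ u), h⟩
    have := hmin T this
    have hlt : T.card < S.card := by
      rw [hT, Finset.card_erase_of_mem hu]
      exact Nat.sub_lt (Finset.card_pos.mpr ⟨u, hu⟩) one_pos
    omega
  have haT : a ∈ ((T : Set V))ᶜ := fun h => haS' (Finset.mem_of_mem_erase h)
  have hbT : b ∈ ((T : Set V))ᶜ := fun h => hbS' (Finset.mem_of_mem_erase h)
  obtain ⟨p0, hp0⟩ := lemB (hTconn.preconnected ⟨a, haT⟩ ⟨b, hbT⟩)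
  -- use a path instead
  set p := p0.bypass with hpdef
  have hpath : p.IsPath := p0.bypass_isPath
  have hnd : p.support.Nodup := hpath.support_nodup
  have hpsub : ∀ x ∈ p.support, x ∉ T := fun x hx =>
    hp0 x (p0.support_bypass_subset hx)
  -- helper: a walk avoiding S between a and b gives a contradiction
  have habS : ∀ (q : G.Walk a b), ¬ (∀ x ∈ q.support, x ∉ S) := by
    intro q hq
    exact hab (lemA q hq haS hbS)
  -- u must be in the support of p
  have hup : u ∈ p.support := by
    by_contra h
    refine habS p (fun x hx hxS => ?_)
    have hxu : x ≠ u := fun he => h (he ▸ hx)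
    exact hpsub x hx (Finset.mem_erase.mpr ⟨hxu, hxS⟩)
  -- split the path at u
  have hspec := p.take_spec hup
  have hsupp_eq : p.support = (p.takeUntil u hup).support
      ++ (p.dropUntil u hup).support.tail := by
    conv_lhs => rw [← hspec]
    exact SimpleGraph.Walk.support_append _ _
  have hnd2 : ((p.takeUntil u hup).support ++ (p.dropUntil u hup).support.tail).Nodup :=
    hsupp_eq ▸ hnd
  -- first piece, reversed: walk from u to a
  set q1 := (p.takeUntil u hup).reverse with hq1
  have hq1supp : q1.support = (p.takeUntil u hup).support.reverse :=
    SimpleGraph.Walk.support_reverse _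
  have hq1nd : q1.support.Nodup := by
    rw [hq1supp]
    exact List.nodup_reverse.mpr (List.nodup_append.mp hnd2).1
  have hq1tail : u ∉ q1.support.tail := by
    have := q1.support_eq_cons
    have hnd' := hq1nd
    rw [this] at hnd'
    exact (List.nodup_cons.mp hnd').1
  have hq1T : ∀ x ∈ q1.support, x ∉ T := by
    intro x hx
    rw [hq1supp, List.mem_reverse] at hx
    exact hpsub x (p.support_takeUntil_subset hup hx)
  obtain ⟨v, hadj_v, hvS, wa, hwa⟩ := lemC hu haS' q1 hq1T hq1tail
  -- second piece: walk from u to b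
  set q2 := p.dropUntil u hup with hq2
  have hq2tail : u ∉ q2.support.tail := by
    intro h
    have hu1 : u ∈ (p.takeUntil u hup).support := SimpleGraph.Walk.end_mem_support _
    exact (List.nodup_append'.mp hnd2).2.2 hu1 h
  have hq2T : ∀ x ∈ q2.support, x ∉ T := fun x hx =>
    hpsub x (p.support_dropUntil_subset hup hx)
  obtain ⟨v', hadj_v', hv'S, wb, hwb⟩ := lemC hu hbS' q2 hq2T hq2tail
  refine ⟨v, v', hadj_v, hadj_v', ?_, ?_⟩
  · rintro rfl
    refine habS (wa.reverse.append wb) ?_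
    intro x hx
    rw [SimpleGraph.Walk.mem_support_append_iff, SimpleGraph.Walk.support_reverse,
      List.mem_reverse] at hx
    rcases hx with hx | hx
    · exact hwa x hx
    · exact hwb x hx
  · intro hloc
    have hreach := hloc S hvS hv'S hκ
    obtain ⟨w, hw⟩ := lemB hreach
    refine habS ((wa.reverse.append w).append wb) ?_
    intro x hx
    rw [SimpleGraph.Walk.mem_support_append_iff,
      SimpleGraph.Walk.mem_support_append_iff, SimpleGraph.Walk.support_reverse,
      List.mem_reverse] at hx
    rcases hx with (hx | hx) | hx
    · exact hwa x hx
    · exact hw x hx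
    · exact hwb x hx
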